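/- Let n ≥ 2 and let T be a semistandard Young tableau of some partition shape with entries in {1,…,2n} whose reading word has dominant restriction; form res(T) by replacing each entry w > n by the barred letter \overline{2n+1−w}. Then in every column C of res(T), each barred entry \overline{l} of C has its unbarred version l also occurring as an entry of C. Consequently, in each column of res(T) the number of entries that are barred or are unbarred letters l with \overline{l} occurring in the same column is even (twice the number of barred entries of that column), so the shape η_T formed by these cancelled boxes, column by column, is even. -/

import Mathlib

/-- Component `j` (0-indexed, `j < n`) of the vector in `ℤ^n` assigned to the letter
`i ∈ {1,…,2n}`: the letter `i` is sent to the standard basis vector `e_i` if `1 ≤ i ≤ n`,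
and to `−e_{2n+1−i}` if `n < i ≤ 2n`. -/
def letterVec (n i j : ℕ) : ℤ :=
  (if i = j + 1 then 1 else 0) - (if i + j = 2 * n then 1 else 0)

/-- Component `j` (0-indexed) of the sum of the vectors assigned to the letters of `w`. -/
def resSum (n : ℕ) (w : List ℕ) (j : ℕ) : ℤ :=
  (w.map fun i => letterVec n i j).sum

/-- A word `w` over `{1,…,2n}` has *dominant restriction* if every partial sum `p` of the
assigned vectors (over prefixes of `w`) satisfies `p 0 ≥ p 1 ≥ ⋯ ≥ p (n-1) ≥ 0`. -/
def DominantRes (n : ℕ) (w : List ℕ) : Prop :=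
  ∀ k : ℕ,
    (∀ j : ℕ, j + 1 < n → resSum n (w.take k) (j + 1) ≤ resSum n (w.take k) j) ∧
    0 ≤ resSum n (w.take k) (n - 1)

/-- A word over the positive integers is a *lattice word* if every prefix contains,
for each `i ≥ 1`, at least as many letters `i` as letters `i+1`. -/
def IsLatticeWord (w : List ℕ) : Prop :=
  ∀ k i : ℕ, 1 ≤ i → (w.take k).count (i + 1) ≤ (w.take k).count i

/-- The entries of row `r` (0-indexed) of `T` lying in the skew shape `lam/nu`,
read from right to left. -/
def skewRowWord (T : ℕ → ℕ → ℕ) (nu lam : ℕ → ℕ) (r : ℕ) : List ℕ :=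
  ((List.range' (nu r) (lam r - nu r)).map (T r)).reverse

/-- The reading word (rows right to left, top row to bottom row) of a skew tableau
whose rows are `0, …, k-1`. -/
def skewReadingWord (T : ℕ → ℕ → ℕ) (nu lam : ℕ → ℕ) (k : ℕ) : List ℕ :=
  ((List.range k).map (skewRowWord T nu lam)).flatten

/-- `T` is a skew semistandard tableau of shape `lam/nu`: entries are positive,
rows weakly increase from left to right, and columns strictly increase from top to bottom.
Rows are indexed `0, 1, 2, …` from the top and columns `0, 1, 2, …` from the left;
the cells of row `r` are the `c` with `nu r ≤ c < lam r`. -/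
def IsSkewSSYT (T : ℕ → ℕ → ℕ) (nu lam : ℕ → ℕ) : Prop :=
  (∀ r c, nu r ≤ c → c < lam r → 1 ≤ T r c) ∧
  (∀ r c c', nu r ≤ c → c ≤ c' → c' < lam r → T r c ≤ T r c') ∧
  (∀ r r' c, r < r' → nu r ≤ c → c < lam r → nu r' ≤ c → c < lam r' → T r c < T r' c)

/-- `T` is a semistandard Young tableau of (straight) shape `lam` with entries
in `{1, …, N}`. -/
def IsSSYT (T : ℕ → ℕ → ℕ) (lam : ℕ → ℕ) (N : ℕ) : Prop :=
  IsSkewSSYT T (fun _ => 0) lam ∧ ∀ r c, c < lam r → T r c ≤ N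

/-- The reading word of a straight-shape tableau with rows `0, …, k-1`. -/
def readingWord (T : ℕ → ℕ → ℕ) (lam : ℕ → ℕ) (k : ℕ) : List ℕ :=
  skewReadingWord T (fun _ => 0) lam k

/-- `T` vanishes outside the skew shape `lam/nu` (a normalization used when counting
tableaux, so that a tableau is determined by its entries inside the shape). -/
def ZeroOutside (T : ℕ → ℕ → ℕ) (nu lam : ℕ → ℕ) : Prop :=
  ∀ r c, c < nu r ∨ lam r ≤ c → T r c = 0

/-- The partition with (at most) three rows `a ≥ b ≥ c`, as a row-length function. -/
def shape3 (a b c : ℕ) : ℕ → ℕ :=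
  fun r => if r = 0 then a else if r = 1 then b else if r = 2 then c else 0

/-- `T` is a Littlewood–Richardson tableau of skew shape `lam/nu` and weight `eta`
(with rows `0, …, k-1`): a skew semistandard tableau whose reading word is a lattice
word and which has exactly `eta i` entries equal to `i + 1` for every `i`. -/
def IsLRTableau (T : ℕ → ℕ → ℕ) (nu lam eta : ℕ → ℕ) (k : ℕ) : Prop :=
  IsSkewSSYT T nu lam ∧ IsLatticeWord (skewReadingWord T nu lam k) ∧
    ∀ i : ℕ, (skewReadingWord T nu lam k).count (i + 1) = eta i

/-- The `n`-symplectic Sundaram condition for a tableau of skew shape `lam/nu`, where `l`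
is the length of the longest column of the weight: for each `i ≤ l/2`, the letter `2i+1`
does not occur strictly below row `n + i` (rows counted `1, 2, …` from the top; in the
0-indexed row `r` this means `r ≥ n + i`). -/
def IsSundaram (n l : ℕ) (T : ℕ → ℕ → ℕ) (nu lam : ℕ → ℕ) : Prop :=
  ∀ i : ℕ, i ≤ l / 2 → ∀ r c, n + i ≤ r → nu r ≤ c → c < lam r → T r c ≠ 2 * i + 1

section StmtTenAux

lemma resSum_count' {n : ℕ} (w : List ℕ) {j : ℕ} (hj : j ≤ 2 * n) :
    resSum n w j = (w.count (j + 1) : ℤ) - (w.count (2 * n - j) : ℤ) := by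
  induction w with
  | nil => simp [resSum]
  | cons a t ih =>
      have hstep : resSum n (a :: t) j = letterVec n a j + resSum n t j := by
        simp [resSum]
      have c1 : (((a :: t).count (j + 1) : ℕ) : ℤ)
          = (t.count (j + 1) : ℤ) + (if a = j + 1 then 1 else 0) := by
        rw [List.count_cons]
        by_cases h : a = j + 1 <;> simp [h]
      have c2 : (((a :: t).count (2 * n - j) : ℕ) : ℤ)
          = (t.count (2 * n - j) : ℤ) + (if a = 2 * n - j then 1 else 0) := by
        rw [List.count_cons]
        by_cases h : a = 2 * n - j <;> simp [h]
      have hlv : letterVec n a j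
          = (if a = j + 1 then (1 : ℤ) else 0) - (if a = 2 * n - j then (1 : ℤ) else 0) := by
        unfold letterVec
        congr 1
        by_cases h2 : a + j = 2 * n
        · rw [if_pos h2, if_pos (by omega)]
        · rw [if_neg h2, if_neg (by omega)]
      rw [hstep, ih, c1, c2, hlv]
      ring

theorem keyC {n : ℕ} (hn : 2 ≤ n) {lam : ℕ → ℕ}
    (hlam : ∀ r, lam (r + 1) ≤ lam r) {k : ℕ} (hk : ∀ r, k ≤ r → lam r = 0)
    {T : ℕ → ℕ → ℕ} (hT : IsSSYT T lam (2 * n))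
    (hdom : DominantRes n (readingWord T lam k)) :
    ∀ r c, c < lam r → T r c = r + 1 ∨ (n < T r c ∧ 2 * n + 1 ≤ T r c + r) := by
  obtain ⟨⟨hpos, hrow, hcol⟩, hbound⟩ := hT
  have colLB : ∀ r c, c < lam r → r + 1 ≤ T r c := by
    intro r
    induction r with
    | zero => intro c hc; exact hpos 0 c (Nat.zero_le _) hc
    | succ r ih =>
        intro c hc
        have hcr : c < lam r := lt_of_lt_of_le hc (hlam r)
        have h1 := hcol r (r + 1) c (Nat.lt_succ_self r) (Nat.zero_le _) hcr (Nat.zero_le _) hc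
        have h2 := ih c hcr
        omega
  have H : ∀ N r c, (Finset.range r).sum lam + (lam r - c) ≤ N → c < lam r →
      T r c = r + 1 ∨ (n < T r c ∧ 2 * n + 1 ≤ T r c + r) := by
    intro N
    induction N with
    | zero => intro r c hN hc; omega
    | succ N ih =>
        intro r c hN hc
        have IH : ∀ i c', (i < r ∧ c' < lam i) ∨ (i = r ∧ c < c' ∧ c' < lam r) →
            T i c' = i + 1 ∨ (n < T i c' ∧ 2 * n + 1 ≤ T i c' + i) := by
          intro i c' hi
          rcases hi with ⟨hi, hc'⟩ | ⟨rfl, hc1, hc2⟩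
          · refine ih i c' ?_ hc'
            have h1 : (Finset.range (i + 1)).sum lam ≤ (Finset.range r).sum lam := by
              refine Finset.sum_le_sum_of_subset ?_
              intro x hx
              simp only [Finset.mem_range] at *
              omega
            have h2 : (Finset.range (i + 1)).sum lam = (Finset.range i).sum lam + lam i := by
              rw [Finset.sum_range_succ]
            omega
          · exact ih i c' (by omega) hc2
        have hrk : r < k := by
          by_contra h
          have := hk r (by omega)
          omega
        have hv2n : T r c ≤ 2 * n := hbound r c hc
        have hvlb : r + 1 ≤ T r c := colLB r c hc
        set v := T r c with hv
        set Qrow : List ℕ := ((List.range' c (lam r - c)).map (T r)).reverse with hQrow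
        set Q : List ℕ :=
          ((List.range r).map (skewRowWord T (fun _ => 0) lam)).flatten ++ Qrow with hQ
        have hsplit : readingWord T lam k = Q ++
            (((List.range' 0 c).map (T r)).reverse ++
              ((List.range' (r + 1) (k - (r + 1))).map (skewRowWord T (fun _ => 0) lam)).flatten) := by
          rw [readingWord, skewReadingWord]
          have h1 : List.range k = List.range r ++ [r] ++ List.range' (r + 1) (k - (r + 1)) := by
            have e1 := @List.range'_append 0 (r + 1) (k - (r + 1)) 1
            have e2 := @List.range'_append 0 r 1 1
            simp only [one_mul, zero_add] at e1 e2
            rw [show r + 1 + (k - (r + 1)) = k from by omega] at e1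
            have h2 : List.range' 0 (r + 1) = List.range r ++ [r] := by
              rw [← e2, List.range'_one,
                ← List.range_eq_range']
            rw [List.range_eq_range' (n := k), ← e1, h2]
          have hrowsplit : skewRowWord T (fun _ => 0) lam r
              = Qrow ++ ((List.range' 0 c).map (T r)).reverse := by
            rw [skewRowWord]
            have e3 := @List.range'_append 0 c (lam r - c) 1
            simp only [one_mul, zero_add] at e3
            have e4 : List.range' 0 (lam r - 0) = List.range' 0 c ++ List.range' c (lam r - c) := by
              rw [e3]
              congr 1
              omega
            rw [e4, List.map_append, List.reverse_append, hQrow]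
          rw [h1, List.map_append, List.map_append, List.flatten_append, List.flatten_append]
          simp only [List.map_cons, List.map_nil, List.flatten_cons, List.flatten_nil,
            List.append_nil]
          rw [hrowsplit, hQ]
          simp [List.append_assoc]
        have hmemQ : ∀ y ∈ Q, (∃ i, i < r ∧ ∃ c', c' < lam i ∧ T i c' = y) ∨
            (∃ c', c ≤ c' ∧ c' < lam r ∧ T r c' = y) := by
          intro y hy
          rw [hQ, List.mem_append] at hy
          rcases hy with hy | hy
          · left
            rw [List.mem_flatten] at hy
            obtain ⟨l, hl, hyl⟩ := hy
            rw [List.mem_map] at hl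
            obtain ⟨i, hir, rfl⟩ := hl
            rw [List.mem_range] at hir
            rw [skewRowWord, List.mem_reverse, List.mem_map] at hyl
            obtain ⟨c', hc', rfl⟩ := hyl
            rw [List.mem_range'_1] at hc'
            exact ⟨i, hir, c', by omega, rfl⟩
          · right
            rw [hQrow, List.mem_reverse, List.mem_map] at hy
            obtain ⟨c', hc', rfl⟩ := hy
            rw [List.mem_range'_1] at hc'
            exact ⟨c', by omega, by omega, rfl⟩
        have hvQ : v ∈ Q := by
          rw [hQ, List.mem_append]
          right
          rw [hQrow, List.mem_reverse, List.mem_map]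
          exact ⟨c, by rw [List.mem_range'_1]; omega, rfl⟩
        have hdomQ := hdom Q.length
        rw [hsplit, List.take_left] at hdomQ
        obtain ⟨hstep, hlast⟩ := hdomQ
        have hchain : ∀ j, j < n → 0 ≤ resSum n Q j := by
          have key : ∀ d j', j' + d = n - 1 → 0 ≤ resSum n Q j' := by
            intro d
            induction d with
            | zero =>
                intro j' hj'
                have hj : j' = n - 1 := by omega
                rw [hj]; exact hlast
            | succ d ihd =>
                intro j' hj'
                have h1 := hstep j' (by omega)
                have h2 := ihd (j' + 1) (by omega)
                linarith
          intro j hj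
          exact key (n - 1 - j) j (by omega)
        have hvcount : 1 ≤ Q.count v := List.count_pos_iff.mpr hvQ
        by_cases hbarred : v ≤ n
        · left
          by_contra hne
          have hvlb2 : r + 2 ≤ v := by omega
          have hB1 : Q.count (v - 1) = 0 := by
            rw [List.count_eq_zero]
            intro hmem
            rcases hmemQ _ hmem with ⟨i, hir, c', hc', he⟩ | ⟨c', hc1, hc2, he⟩
            · rcases IH i c' (Or.inl ⟨hir, hc'⟩) with h | h <;> omega
            · have hge : T r c ≤ T r c' := hrow r c c' (Nat.zero_le _) hc1 hc2
              omega
          have hB2 : Q.count (2 * n + 1 - v) = 0 := by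
            rw [List.count_eq_zero]
            intro hmem
            rcases hmemQ _ hmem with ⟨i, hir, c', hc', he⟩ | ⟨c', hc1, hc2, he⟩
            · rcases IH i c' (Or.inl ⟨hir, hc'⟩) with h | h <;> omega
            · have hge : T r c ≤ T r c' := hrow r c c' (Nat.zero_le _) hc1 hc2
              rcases eq_or_lt_of_le hc1 with rfl | hlt
              · omega
              · rcases IH r c' (Or.inr ⟨rfl, hlt, hc2⟩) with h | h <;> omega
          have e1 := resSum_count' (n := n) Q (j := v - 1) (by omega)
          have e2 := resSum_count' (n := n) Q (j := v - 2) (by omega)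
          rw [show v - 1 + 1 = v by omega, show 2 * n - (v - 1) = 2 * n + 1 - v by omega] at e1
          rw [show v - 2 + 1 = v - 1 by omega] at e2
          have hstep' := hstep (v - 2) (by omega)
          rw [show v - 2 + 1 = v - 1 by omega] at hstep'
          have hfin1 : (1 : ℤ) ≤ resSum n Q (v - 1) := by
            rw [e1, hB2]
            push_cast
            omega
          have hfin2 : resSum n Q (v - 2) ≤ 0 := by
            rw [e2, hB1]
            have : (0 : ℤ) ≤ (Q.count (2 * n - (v - 2)) : ℤ) := by positivity
            push_cast
            omega
          linarith
        · right
          refine ⟨by omega, ?_⟩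
          by_contra hb
          have hs1 : 1 ≤ 2 * n + 1 - v := by omega
          have hsn : 2 * n + 1 - v ≤ n := by omega
          have hBs : Q.count (2 * n + 1 - v) = 0 := by
            rw [List.count_eq_zero]
            intro hmem
            rcases hmemQ _ hmem with ⟨i, hir, c', hc', he⟩ | ⟨c', hc1, hc2, he⟩
            · rcases IH i c' (Or.inl ⟨hir, hc'⟩) with h | h <;> omega
            · have hge : T r c ≤ T r c' := hrow r c c' (Nat.zero_le _) hc1 hc2
              omega
          have e1 := resSum_count' (n := n) Q (j := 2 * n + 1 - v - 1) (by omega)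
          rw [show 2 * n + 1 - v - 1 + 1 = 2 * n + 1 - v by omega,
            show 2 * n - (2 * n + 1 - v - 1) = v by omega] at e1
          have hch := hchain (2 * n + 1 - v - 1) (by omega)
          rw [e1, hBs] at hch
          push_cast at hch
          omega
  intro r c hc
  exact H ((Finset.range r).sum lam + (lam r - c)) r c le_rfl hc

end StmtTenAux

/-- Let `n ≥ 2` and let `T` be a semistandard Young tableau of some
partition shape with entries in `{1,…,2n}` whose reading word has dominant restriction,
and form `res(T)` by replacing each entry `w > n` by the barred letter `2n+1−w` (so the
cell `(r, c)` carries a barred entry iff `T r c > n`, and the barred entry there is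
`l̄` with `l = 2n+1−T r c`). Then in every column of `res(T)` each barred entry `l̄` has
its unbarred version `l` also occurring in that column; consequently, in each column the
number of cancelled boxes — boxes whose entry is barred, or is an unbarred letter `l`
such that `l̄` occurs in the same column — is even, namely twice the number of barred
entries of that column, so the shape `η_T` formed column by column by these cancelled
boxes is even. -/
theorem stmt10 (n : ℕ) (hn : 2 ≤ n) (lam : ℕ → ℕ)
    (hlam : ∀ r, lam (r + 1) ≤ lam r) (k : ℕ) (hk : ∀ r, k ≤ r → lam r = 0)
    (T : ℕ → ℕ → ℕ) (hT : IsSSYT T lam (2 * n))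
    (hdom : DominantRes n (readingWord T lam k)) :
    (∀ r c, c < lam r → n < T r c →
      ∃ r', c < lam r' ∧ T r' c = 2 * n + 1 - T r c) ∧
    (∀ c : ℕ,
      ((Finset.range k).filter fun r => c < lam r ∧
          (n < T r c ∨ ∃ r' ∈ Finset.range k, c < lam r' ∧ n < T r' c ∧
            T r c = 2 * n + 1 - T r' c)).card =
        2 * ((Finset.range k).filter fun r => c < lam r ∧ n < T r c).card) := by

  have hC := keyC hn hlam hk hT hdom
  obtain ⟨⟨hpos, hrowm, hcolm⟩, hbound⟩ := hT
  have lamM : ∀ a b : ℕ, a ≤ b → lam b ≤ lam a := fun a b h =>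
    antitone_nat_of_succ_le hlam h
  have colInj : ∀ a b c, c < lam a → c < lam b → T a c = T b c → a = b := by
    intro a b c ha hb he
    rcases lt_trichotomy a b with h | h | h
    · exact absurd he (Nat.ne_of_lt (hcolm a b c h (Nat.zero_le _) ha (Nat.zero_le _) hb))
    · exact h
    · exact absurd he.symm (Nat.ne_of_lt (hcolm b a c h (Nat.zero_le _) hb (Nat.zero_le _) ha))
  have key : ∀ r c, c < lam r → n < T r c →
      2 * n + 1 - T r c ≤ r ∧ c < lam (2 * n - T r c) ∧
        T (2 * n - T r c) c = 2 * n + 1 - T r c := by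
    intro r c hc hbar
    have h2n : T r c ≤ 2 * n := hbound r c hc
    have hsr : 2 * n + 1 - T r c ≤ r := by
      rcases hC r c hc with h | h <;> omega
    have hlt : 2 * n - T r c < r := by omega
    have hlam' : c < lam (2 * n - T r c) := lt_of_lt_of_le hc (lamM _ _ (le_of_lt hlt))
    have hcolstrict : T (2 * n - T r c) c < T r c :=
      hcolm _ r c hlt (Nat.zero_le _) hlam' (Nat.zero_le _) hc
    rcases hC (2 * n - T r c) c hlam' with h | h
    · exact ⟨hsr, hlam', by omega⟩
    · exfalso; omega
  constructor
  · intro r c hc hbar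
    exact ⟨2 * n - T r c, (key r c hc hbar).2.1, (key r c hc hbar).2.2⟩
  intro c
  classical
  set B := (Finset.range k).filter (fun r => c < lam r ∧ n < T r c) with hB
  set f : ℕ → ℕ := fun r => 2 * n - T r c with hf
  have hSeq : ((Finset.range k).filter fun r => c < lam r ∧
          (n < T r c ∨ ∃ r' ∈ Finset.range k, c < lam r' ∧ n < T r' c ∧
            T r c = 2 * n + 1 - T r' c)) = B ∪ B.image f := by
    ext u
    simp only [hB, hf, Finset.mem_union, Finset.mem_image, Finset.mem_filter, Finset.mem_range]
    constructor
    · rintro ⟨hu, hcu, h | ⟨r', ⟨hr'k, hcr', hnr', hTu⟩⟩⟩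
      · exact Or.inl ⟨hu, hcu, h⟩
      · right
        refine ⟨r', ⟨hr'k, hcr', hnr'⟩, ?_⟩
        obtain ⟨hsr, hl, he⟩ := key r' c hcr' hnr'
        exact colInj _ u c hl hcu (by omega)
    · rintro (⟨hu, hcu, h⟩ | ⟨r', ⟨hr'k, hcr', hnr'⟩, rfl⟩)
      · exact ⟨hu, hcu, Or.inl h⟩
      · obtain ⟨hsr, hl, he⟩ := key r' c hcr' hnr'
        have h2n : T r' c ≤ 2 * n := hbound r' c hcr'
        exact ⟨by omega, hl, Or.inr ⟨r', hr'k, hcr', hnr', by omega⟩⟩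
  rw [hSeq]
  have hdisj : Disjoint B (B.image f) := by
    rw [Finset.disjoint_left]
    intro a haB haI
    simp only [hB, hf, Finset.mem_image, Finset.mem_filter, Finset.mem_range] at haB haI
    obtain ⟨r', ⟨hr'k, hcr', hnr'⟩, hfr⟩ := haI
    obtain ⟨hsr, hl, he⟩ := key r' c hcr' hnr'
    have h2n : T r' c ≤ 2 * n := hbound r' c hcr'
    rw [← hfr] at haB
    omega
  rw [Finset.card_union_of_disjoint hdisj, Finset.card_image_of_injOn, two_mul]
  intro a ha b hb hab
  simp only [hB, Finset.coe_filter, Set.mem_setOf_eq, Finset.mem_range] at ha hb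
  have h2a : T a c ≤ 2 * n := hbound a c ha.2.1
  have h2b : T b c ≤ 2 * n := hbound b c hb.2.1
  simp only [hf] at hab
  have : T a c = T b c := by omega
  exact colInj a b c ha.2.1 hb.2.1 this
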